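/- Let x : V → ℝ be a function on a rational vector space V ⊆ ℝ-vector space H that is homogeneous (x(nφ) = |n| x(φ) for all integers n) and subadditive (x(φ₁+φ₂) ≤ x(φ₁)+x(φ₂)) on an abelian group Λ ⊆ V spanning V, with x ≥ 0. Then x extends uniquely to a continuous seminorm on the real vector space V ⊗ ℝ. -/

import Mathlib

namespace Stmt19Aux

open Finset

variable {n : ℕ}

/-- Common denominator of a rational vector. -/
def den (q : Fin n → ℚ) : ℕ := ∏ i, (q i).den

lemma den_pos (q : Fin n → ℚ) : 0 < den q :=
  Finset.prod_pos fun i _ => (q i).pos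

/-- Integer vector with `numvec q = den q • q`. -/
def numvec (q : Fin n → ℚ) : Fin n → ℤ := fun i => (q i).num * (den q / (q i).den : ℕ)

lemma num_eq (r : ℚ) : (r.num : ℚ) = r * r.den := (Rat.mul_den_eq_num r).symm

lemma numvec_cast (q : Fin n → ℚ) (i : Fin n) : ((numvec q i : ℚ)) = (den q : ℚ) * q i := by
  obtain ⟨m, hm⟩ : (q i).den ∣ den q := Finset.dvd_prod_of_mem _ (mem_univ i)
  have h1 : den q / (q i).den = m := by rw [hm, Nat.mul_div_cancel_left _ (q i).pos]
  rw [numvec, h1, hm]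
  push_cast [num_eq (q i)]
  ring

variable (x : (Fin n → ℤ) → ℝ)

/-- The extension of `x` to rational vectors. -/
noncomputable def y (q : Fin n → ℚ) : ℝ := x (numvec q) / den q

section

variable (hnn : ∀ φ, 0 ≤ x φ)
variable (hhom : ∀ (c : ℤ) (φ : Fin n → ℤ), x (c • φ) = (|c| : ℝ) * x φ)
variable (hsub : ∀ φ ψ : Fin n → ℤ, x (φ + ψ) ≤ x φ + x ψ)

include hhom in
lemma y_spec (q : Fin n → ℚ) (m : ℤ) (hm : 0 < m) (φ : Fin n → ℤ)
    (hφ : ∀ i, (φ i : ℚ) = (m : ℚ) * q i) :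
    y x q = x φ / (m : ℝ) := by
  have key : m • numvec q = (den q : ℤ) • φ := by
    funext i
    have : ((m * numvec q i : ℤ) : ℚ) = (((den q : ℤ) * φ i : ℤ) : ℚ) := by
      push_cast [numvec_cast, hφ]; ring
    exact_mod_cast this
  have h1 := hhom m (numvec q)
  have h2 := hhom (den q : ℤ) φ
  rw [key, h2] at h1
  have hd : (0:ℝ) < (den q : ℝ) := by exact_mod_cast den_pos q
  have hm' : (0:ℝ) < ((m : ℤ) : ℝ) := by exact_mod_cast hm
  have hd2 : (0:ℝ) ≤ (((den q : ℕ) : ℤ) : ℝ) := by positivity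
  rw [abs_of_pos hm', abs_of_nonneg hd2] at h1
  push_cast at h1
  rw [y]
  field_simp
  linarith [h1]

include hhom in
lemma y_intCast (φ : Fin n → ℤ) : y x (fun i => (φ i : ℚ)) = x φ := by
  rw [y_spec x hhom _ 1 one_pos φ (fun i => by push_cast; ring)]
  simp

include hhom in
lemma x_zero : x 0 = 0 := by
  have := hhom 0 0
  simpa using this

include hhom in
lemma y_zero : y x 0 = 0 := by
  rw [y_spec x hhom 0 1 one_pos 0 (fun i => by simp), x_zero x hhom]
  simp

include hnn in
lemma y_nonneg (q : Fin n → ℚ) : 0 ≤ y x q := by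
  have := hnn (numvec q)
  have : (0:ℝ) ≤ (den q : ℝ) := by positivity
  rw [y]; positivity

include hhom hsub in
lemma y_add (p q : Fin n → ℚ) : y x (p + q) ≤ y x p + y x q := by
  have hp : (0:ℝ) < (den p : ℝ) := by exact_mod_cast den_pos p
  have hq : (0:ℝ) < (den q : ℝ) := by exact_mod_cast den_pos q
  have hspec := y_spec x hhom (p + q) ((den p : ℤ) * den q)
      (by exact_mod_cast mul_pos (den_pos p) (den_pos q))
      ((den q : ℤ) • numvec p + (den p : ℤ) • numvec q)
      (fun i => by
        simp only [Pi.add_apply, Pi.smul_apply, smul_eq_mul]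
        push_cast [numvec_cast]
        ring)
  rw [hspec]
  have hb : x ((den q : ℤ) • numvec p + (den p : ℤ) • numvec q)
      ≤ (den q : ℝ) * x (numvec p) + (den p : ℝ) * x (numvec q) := by
    refine (hsub _ _).trans (le_of_eq ?_)
    rw [hhom, hhom]
    push_cast [Nat.abs_cast]
    ring
  have heq : y x p + y x q
      = ((den q : ℝ) * x (numvec p) + (den p : ℝ) * x (numvec q)) / ((den p : ℝ) * den q) := by
    rw [y, y]; field_simp
  rw [heq]
  push_cast
  exact (div_le_div_iff_of_pos_right (by positivity)).2 hb

include hhom in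
lemma y_smul (c : ℚ) (q : Fin n → ℚ) : y x (c • q) = |(c : ℝ)| * y x q := by
  have hcd : (0:ℝ) < (c.den : ℝ) := by exact_mod_cast c.pos
  have hd : (0:ℝ) < (den q : ℝ) := by exact_mod_cast den_pos q
  have hspec := y_spec x hhom (c • q) ((c.den : ℤ) * den q)
      (by exact_mod_cast mul_pos c.pos (den_pos q))
      (c.num • numvec q)
      (fun i => by
        simp only [Pi.smul_apply, smul_eq_mul]
        push_cast [numvec_cast, num_eq c]
        ring)
  rw [hspec, hhom]
  have habs : |(c : ℝ)| = |((c.num : ℤ) : ℝ)| / (c.den : ℝ) := by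
    rw [Rat.cast_def, abs_div, abs_of_pos hcd]
  rw [habs, y]
  push_cast
  field_simp
  try ring

include hhom hsub in
lemma y_le_sum (v : Fin n → ℚ) :
    y x v ≤ ∑ i, |((v i : ℚ) : ℝ)| * x (Pi.single i 1) := by
  classical
  have hsingle : ∀ i : Fin n, y x (Pi.single i (1:ℚ)) = x (Pi.single i (1:ℤ)) := by
    intro i
    set ψ : Fin n → ℤ := Pi.single i 1 with hψ
    have h : (fun j => ((ψ j : ℤ) : ℚ)) = Pi.single i (1:ℚ) := by
      funext j
      by_cases h : j = i <;> simp [hψ, Pi.single_apply, h]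
    rw [← h, y_intCast x hhom]
  calc y x v = y x (∑ i, Pi.single i (v i)) := by rw [Finset.univ_sum_single]
    _ ≤ ∑ i, y x (Pi.single i (v i)) :=
        Finset.le_sum_of_subadditive (y x) (y_zero x hhom).le (y_add x hhom hsub) _ _
    _ = ∑ i, |((v i : ℚ) : ℝ)| * x (Pi.single i 1) := by
        refine Finset.sum_congr rfl fun i _ => ?_
        have h : Pi.single i (v i) = (v i) • (Pi.single i (1:ℚ) : Fin n → ℚ) := by
          funext j
          by_cases h : j = i <;> simp [Pi.single_apply, h]
        rw [h, y_smul x hhom, hsingle]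

/-- The Lipschitz constant. -/
noncomputable def K : NNReal := ∑ i : Fin n, (x (Pi.single i 1)).toNNReal

include hnn in
lemma K_coe : ((K x : NNReal) : ℝ) = ∑ i : Fin n, x (Pi.single i 1) := by
  rw [K, NNReal.coe_sum]
  exact Finset.sum_congr rfl fun i _ => Real.coe_toNNReal _ (hnn _)

include hnn hhom hsub in
lemma y_lip : LipschitzWith (K x) (y x) := by
  refine LipschitzWith.of_dist_le_mul fun p q => ?_
  have hyadd := y_add x hhom hsub
  have h1 : y x p - y x q ≤ y x (p - q) := by
    have := hyadd q (p - q)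
    rw [add_sub_cancel] at this
    linarith
  have h2 : y x q - y x p ≤ y x (p - q) := by
    have hneg : y x (q - p) = y x (p - q) := by
      have he : q - p = (-1 : ℚ) • (p - q) := by
        funext i; simp
      rw [he, y_smul x hhom]
      norm_num
    have := hyadd p (q - p)
    rw [add_sub_cancel] at this
    linarith [hneg ▸ this]
  have h3 : y x (p - q) ≤ (K x : ℝ) * dist p q := by
    refine (y_le_sum x hhom hsub (p - q)).trans ?_
    rw [K_coe x hnn, Finset.sum_mul]
    refine Finset.sum_le_sum fun i _ => ?_
    have hcoord : |(((p - q) i : ℚ) : ℝ)| ≤ dist p q := by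
      have hle := dist_le_pi_dist p q i
      rw [← Rat.dist_cast, Real.dist_eq] at hle
      calc |(((p - q) i : ℚ) : ℝ)| = |((p i : ℝ)) - ((q i : ℝ))| := by
            rw [Pi.sub_apply]; push_cast; ring_nf
        _ ≤ dist p q := hle
    calc |(((p - q) i : ℚ) : ℝ)| * x (Pi.single i 1)
        ≤ dist p q * x (Pi.single i 1) := by
          exact mul_le_mul_of_nonneg_right hcoord (hnn _)
      _ = x (Pi.single i 1) * dist p q := by ring
  rw [Real.dist_eq]
  rw [abs_sub_le_iff]
  exact ⟨h1.trans h3, h2.trans h3⟩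

end

end Stmt19Aux

/-- Thurston's extension argument: a non-negative, `ℤ`-homogeneous, subadditive function on the
lattice `ℤⁿ ⊆ ℝⁿ` extends uniquely to a continuous seminorm on `ℝⁿ`. -/
theorem stmt19 (n : ℕ) (x : (Fin n → ℤ) → ℝ)
    (hnn : ∀ φ, 0 ≤ x φ)
    (hhom : ∀ (c : ℤ) (φ : Fin n → ℤ), x (c • φ) = (|c| : ℝ) * x φ)
    (hsub : ∀ φ ψ : Fin n → ℤ, x (φ + ψ) ≤ x φ + x ψ) :
    ∃! N : Seminorm ℝ (Fin n → ℝ),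
      Continuous (N : (Fin n → ℝ) → ℝ) ∧
        ∀ φ : Fin n → ℤ, N (fun i => (φ i : ℝ)) = x φ := by
  classical
  open Stmt19Aux in
  -- the coordinatewise cast from `ℚⁿ` to `ℝⁿ`
  set c : (Fin n → ℚ) → (Fin n → ℝ) := fun q i => (q i : ℝ) with hc
  have hiso : Isometry c := by
    refine Isometry.of_dist_eq fun p q => ?_
    rw [dist_pi_def, dist_pi_def]
    congr 1
  have hdr : DenseRange c := by
    rw [Metric.denseRange_iff]
    intro v r hr
    have h : ∀ i : Fin n, ∃ q : ℚ, |v i - (q : ℝ)| < r := fun i => exists_rat_near (v i) hr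
    choose q hq using h
    exact ⟨q, (dist_pi_lt_iff hr).2 fun i => by rw [Real.dist_eq]; exact hq i⟩
  have hui : IsUniformInducing c := hiso.isUniformInducing
  have hdi : IsDenseInducing c := hui.isDenseInducing hdr
  have hyuc : UniformContinuous (Stmt19Aux.y x) := (y_lip x hnn hhom hsub).uniformContinuous
  set F : (Fin n → ℝ) → ℝ := hdi.extend (Stmt19Aux.y x) with hF
  have hFc : Continuous F := (uniformContinuous_uniformly_extend hui hdr hyuc).continuous
  have hFeq : ∀ q, F (c q) = Stmt19Aux.y x q := fun q => uniformly_extend_of_ind hui hdr hyuc q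
  -- seminorm axioms by density
  have hFsmul : ∀ (a : ℝ) (v : Fin n → ℝ), F (a • v) = ‖a‖ * F v := by
    have hd2 : DenseRange (Prod.map (Rat.cast : ℚ → ℝ) c) :=
      (Rat.denseRange_cast (𝕜 := ℝ)).prodMap hdr
    have key : ∀ z : ℝ × (Fin n → ℝ), F (z.1 • z.2) = ‖z.1‖ * F z.2 := by
      refine isClosed_property hd2 ?_ ?_
      · exact isClosed_eq (hFc.comp (continuous_fst.smul continuous_snd))
          (continuous_fst.norm.mul (hFc.comp continuous_snd))
      · rintro ⟨r, q⟩
        show F ((r : ℝ) • c q) = ‖(r : ℝ)‖ * F (c q)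
        have h : (r : ℝ) • c q = c (r • q) := by
          funext i
          simp only [hc, Pi.smul_apply, smul_eq_mul]
          push_cast
          ring
        rw [h, hFeq, hFeq, y_smul x hhom, Real.norm_eq_abs]
    exact fun a v => key (a, v)
  have hFadd : ∀ u v : Fin n → ℝ, F (u + v) ≤ F u + F v := by
    have key : ∀ z : (Fin n → ℝ) × (Fin n → ℝ), F (z.1 + z.2) ≤ F z.1 + F z.2 := by
      refine isClosed_property (hdr.prodMap hdr) ?_ ?_
      · exact isClosed_le (hFc.comp (continuous_fst.add continuous_snd))
          ((hFc.comp continuous_fst).add (hFc.comp continuous_snd))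
      · rintro ⟨p, q⟩
        show F (c p + c q) ≤ F (c p) + F (c q)
        have h : c p + c q = c (p + q) := by
          funext i
          simp only [hc, Pi.add_apply]
          push_cast
          ring
        rw [h, hFeq, hFeq, hFeq]
        exact y_add x hhom hsub p q
    exact fun u v => key (u, v)
  refine ⟨Seminorm.of F hFadd hFsmul, ⟨hFc, ?_⟩, ?_⟩
  · intro φ
    show F (fun i => (φ i : ℝ)) = x φ
    have h : (fun i => ((φ i : ℤ) : ℝ)) = c (fun i => (φ i : ℚ)) := by
      funext i
      simp only [hc]
      push_cast
      rfl
    rw [h, hFeq, y_intCast x hhom]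
  · rintro N' ⟨hN'c, hN'eq⟩
    ext v
    show (N' : (Fin n → ℝ) → ℝ) v = F v
    refine isClosed_property hdr (isClosed_eq hN'c hFc) (fun q => ?_) v
    have hdpos : (0:ℝ) < (den q : ℝ) := by exact_mod_cast den_pos q
    have hrep : c q = ((den q : ℝ))⁻¹ • (fun i => ((numvec q i : ℤ) : ℝ)) := by
      funext i
      have h2 : ((numvec q i : ℝ)) = (den q : ℝ) * (q i : ℝ) := by
        exact_mod_cast congrArg (Rat.cast : ℚ → ℝ) (numvec_cast q i)
      simp only [hc, Pi.smul_apply, smul_eq_mul, h2]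
      field_simp
    have habs : ‖((den q : ℝ))⁻¹‖ = ((den q : ℝ))⁻¹ := by
      rw [Real.norm_eq_abs]
      exact abs_of_pos (by positivity)
    rw [hrep, map_smul_eq_mul, hN'eq, ← hrep, hFeq, habs, Stmt19Aux.y, inv_mul_eq_div]
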